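/- arXiv:2505.07810 — 6 statements merged into one kernel-verified Lean document; each statement's English description precedes it below -/
import Mathlib

section
/- Let a, b, c, d be integers such that c and c + d are nonzero and have the same sign, and suppose ⌊a/c⌋ = ⌊(a+b)/(c+d)⌋ = b₀ for some integer b₀. Then for every real number x with x ≥ 1, one has ⌊(ax+b)/(cx+d)⌋ = b₀. -/
/-- If `c` and `c + d` are nonzero integers with the same sign and
`⌊a/c⌋ = ⌊(a+b)/(c+d)⌋ = b₀`, then for every real `x ≥ 1` one has
`⌊(a*x+b)/(c*x+d)⌋ = b₀`. -/
theorem stmt_1 (a b c d b₀ : ℤ) (hc : c ≠ 0) (hcd : c + d ≠ 0) (hsign : 0 < c * (c + d))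
    (h1 : ⌊(a : ℝ) / c⌋ = b₀) (h2 : ⌊((a : ℝ) + b) / ((c : ℝ) + d)⌋ = b₀) :
    ∀ x : ℝ, 1 ≤ x → ⌊((a : ℝ) * x + b) / ((c : ℝ) * x + d)⌋ = b₀ := by
  intro x hx
  have hcR : (c:ℝ) ≠ 0 := by exact_mod_cast hc
  have hP : (0:ℝ) < c * (c + d) := by exact_mod_cast hsign
  have hQP : (c:ℝ) * (c + d) ≤ c * (c * x + d) := by nlinarith [sq_nonneg (c:ℝ)]
  have hQ : (0:ℝ) < c * (c * x + d) := lt_of_lt_of_le hP hQP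
  have hden : (c:ℝ) * x + d ≠ 0 := by
    intro h; rw [h, mul_zero] at hQ; exact lt_irrefl 0 hQ
  have hcdR : (c:ℝ) + d ≠ 0 := by exact_mod_cast hcd
  set K : ℝ := b * c - a * d with hK
  have hfx : ((a:ℝ)*x + b)/((c:ℝ)*x + d) = a/c + K/(c*(c*x+d)) := by
    rw [hK, div_add_div _ _ hcR (mul_ne_zero hcR hden), div_eq_div_iff hden (mul_ne_zero hcR (mul_ne_zero hcR hden))]; ring
  have hf1 : ((a:ℝ)+b)/((c:ℝ)+d) = a/c + K/(c*(c+d)) := by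
    field_simp; ring
  have h1' := (Int.floor_eq_iff (R := ℝ)).mp h1
  have h2' := (Int.floor_eq_iff (R := ℝ)).mp h2
  rw [hf1] at h2'
  rw [hfx, Int.floor_eq_iff]
  rcases le_or_gt 0 K with hK0 | hK0
  · constructor
    · have : (0:ℝ) ≤ K/(c*(c*x+d)) := div_nonneg hK0 hQ.le
      linarith [h1'.1]
    · have : K/(c*(c*x+d)) ≤ K/(c*(c+d)) := by
        rw [div_le_div_iff₀ hQ hP]; nlinarith
      linarith [h2'.2]
  · constructor
    · have : K/(c*(c+d)) ≤ K/(c*(c*x+d)) := by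
        rw [div_le_div_iff₀ hP hQ]; nlinarith
      linarith [h2'.1]
    · have : K/(c*(c*x+d)) ≤ 0 := div_nonpos_of_nonpos_of_nonneg hK0.le hQ.le
      linarith [h1'.2]
end

section
/- Let a, b, c, d, e, f, g, h be integers such that e, e+f, e+g and e+f+g+h are nonzero and all have the same sign. Then for all real numbers x, y with x ≥ 1 and y ≥ 1, one has exy + fx + gy + h ≠ 0 and the value (axy+bx+cy+d)/(exy+fx+gy+h) lies between the minimum and the maximum of the four numbers a/e, (a+b)/(e+f), (a+c)/(e+g), (a+b+c+d)/(e+f+g+h). -/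
lemma keypos (A B C D E F G H : ℝ)
    (hE : 0 < E) (hEF : 0 < E + F) (hEG : 0 < E + G) (hS : 0 < E + F + G + H)
    (x y : ℝ) (hx : 1 ≤ x) (hy : 1 ≤ y) :
    0 < E * x * y + F * x + G * y + H ∧
    min (min (A / E) ((A + B) / (E + F)))
        (min ((A + C) / (E + G)) ((A + B + C + D) / (E + F + G + H)))
      ≤ (A * x * y + B * x + C * y + D) / (E * x * y + F * x + G * y + H) ∧
    (A * x * y + B * x + C * y + D) / (E * x * y + F * x + G * y + H)
      ≤ max (max (A / E) ((A + B) / (E + F)))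
            (max ((A + C) / (E + G)) ((A + B + C + D) / (E + F + G + H))) := by
  have hu : 0 ≤ x - 1 := by linarith
  have hv : 0 ≤ y - 1 := by linarith
  have huv : 0 ≤ (x - 1) * (y - 1) := mul_nonneg hu hv
  have hden : 0 < E * x * y + F * x + G * y + H := by
    nlinarith [mul_nonneg hE.le huv, mul_nonneg hEF.le hu, mul_nonneg hEG.le hv]
  refine ⟨hden, ?_, ?_⟩
  · set m := min (min (A / E) ((A + B) / (E + F)))
        (min ((A + C) / (E + G)) ((A + B + C + D) / (E + F + G + H))) with hm
    have h1 : m * E ≤ A := (le_div_iff₀ hE).1 (le_trans (min_le_left _ _) (min_le_left _ _))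
    have h2 : m * (E + F) ≤ A + B :=
      (le_div_iff₀ hEF).1 (le_trans (min_le_left _ _) (min_le_right _ _))
    have h3 : m * (E + G) ≤ A + C :=
      (le_div_iff₀ hEG).1 (le_trans (min_le_right _ _) (min_le_left _ _))
    have h4 : m * (E + F + G + H) ≤ A + B + C + D :=
      (le_div_iff₀ hS).1 (le_trans (min_le_right _ _) (min_le_right _ _))
    rw [le_div_iff₀ hden]
    nlinarith [mul_le_mul_of_nonneg_right h1 huv, mul_le_mul_of_nonneg_right h2 hu,
      mul_le_mul_of_nonneg_right h3 hv]
  · set M := max (max (A / E) ((A + B) / (E + F)))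
        (max ((A + C) / (E + G)) ((A + B + C + D) / (E + F + G + H))) with hM
    have h1 : A ≤ M * E := (div_le_iff₀ hE).1 (le_trans (le_max_left _ _) (le_max_left _ _))
    have h2 : A + B ≤ M * (E + F) :=
      (div_le_iff₀ hEF).1 (le_trans (le_max_right _ _) (le_max_left _ _))
    have h3 : A + C ≤ M * (E + G) :=
      (div_le_iff₀ hEG).1 (le_trans (le_max_left _ _) (le_max_right _ _))
    have h4 : A + B + C + D ≤ M * (E + F + G + H) :=
      (div_le_iff₀ hS).1 (le_trans (le_max_right _ _) (le_max_right _ _))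
    rw [div_le_iff₀ hden]
    nlinarith [mul_le_mul_of_nonneg_right h1 huv, mul_le_mul_of_nonneg_right h2 hu,
      mul_le_mul_of_nonneg_right h3 hv]

/-- If `e`, `e+f`, `e+g`, `e+f+g+h` are nonzero integers all of the same sign
(i.e. all positive or all negative), then for all reals `x, y ≥ 1` the denominator
`e*x*y + f*x + g*y + h` is nonzero, and the bilinear fractional transform lies between the
minimum and the maximum of `a/e`, `(a+b)/(e+f)`, `(a+c)/(e+g)`, `(a+b+c+d)/(e+f+g+h)`. -/
theorem stmt_2 (a b c d e f g h : ℤ)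
    (hsign : (0 < e ∧ 0 < e + f ∧ 0 < e + g ∧ 0 < e + f + g + h) ∨
             (e < 0 ∧ e + f < 0 ∧ e + g < 0 ∧ e + f + g + h < 0)) :
    ∀ x y : ℝ, 1 ≤ x → 1 ≤ y →
      (e : ℝ) * x * y + f * x + g * y + h ≠ 0 ∧
      min (min ((a : ℝ) / e) (((a : ℝ) + b) / ((e : ℝ) + f)))
          (min (((a : ℝ) + c) / ((e : ℝ) + g)) (((a : ℝ) + b + c + d) / ((e : ℝ) + f + g + h)))
        ≤ ((a : ℝ) * x * y + b * x + c * y + d) / ((e : ℝ) * x * y + f * x + g * y + h) ∧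
      ((a : ℝ) * x * y + b * x + c * y + d) / ((e : ℝ) * x * y + f * x + g * y + h)
        ≤ max (max ((a : ℝ) / e) (((a : ℝ) + b) / ((e : ℝ) + f)))
              (max (((a : ℝ) + c) / ((e : ℝ) + g))
                   (((a : ℝ) + b + c + d) / ((e : ℝ) + f + g + h))) := by
  intro x y hx hy
  rcases hsign with ⟨h1, h2, h3, h4⟩ | ⟨h1, h2, h3, h4⟩
  · obtain ⟨hd, hmin, hmax⟩ := keypos (a : ℝ) b c d e f g h
      (by exact_mod_cast h1) (by exact_mod_cast h2) (by exact_mod_cast h3)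
      (by exact_mod_cast h4) x y hx hy
    exact ⟨hd.ne', hmin, hmax⟩
  · obtain ⟨hd, hmin, hmax⟩ := keypos (-(a : ℝ)) (-(b:ℝ)) (-(c:ℝ)) (-(d:ℝ))
      (-(e : ℝ)) (-(f:ℝ)) (-(g:ℝ)) (-(h:ℝ))
      (by have : (e:ℝ) < 0 := (by exact_mod_cast h1); linarith)
      (by have : (e:ℝ) + f < 0 := (by exact_mod_cast h2); linarith)
      (by have : (e:ℝ) + g < 0 := (by exact_mod_cast h3); linarith)
      (by have : (e:ℝ) + f + g + h < 0 := (by exact_mod_cast h4); linarith)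
      x y hx hy
    have e1 : (-(a:ℝ)) / (-(e:ℝ)) = (a:ℝ) / e := neg_div_neg_eq _ _
    have e2 : ((-(a:ℝ)) + (-(b:ℝ))) / ((-(e:ℝ)) + (-(f:ℝ))) = ((a:ℝ) + b) / ((e:ℝ) + f) := by
      rw [show (-(a:ℝ)) + (-(b:ℝ)) = -((a:ℝ) + b) by ring,
        show (-(e:ℝ)) + (-(f:ℝ)) = -((e:ℝ) + f) by ring, neg_div_neg_eq]
    have e3 : ((-(a:ℝ)) + (-(c:ℝ))) / ((-(e:ℝ)) + (-(g:ℝ))) = ((a:ℝ) + c) / ((e:ℝ) + g) := by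
      rw [show (-(a:ℝ)) + (-(c:ℝ)) = -((a:ℝ) + c) by ring,
        show (-(e:ℝ)) + (-(g:ℝ)) = -((e:ℝ) + g) by ring, neg_div_neg_eq]
    have e4 : ((-(a:ℝ)) + (-(b:ℝ)) + (-(c:ℝ)) + (-(d:ℝ))) /
        ((-(e:ℝ)) + (-(f:ℝ)) + (-(g:ℝ)) + (-(h:ℝ)))
        = ((a:ℝ) + b + c + d) / ((e:ℝ) + f + g + h) := by
      rw [show (-(a:ℝ)) + (-(b:ℝ)) + (-(c:ℝ)) + (-(d:ℝ)) = -((a:ℝ) + b + c + d) by ring,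
        show (-(e:ℝ)) + (-(f:ℝ)) + (-(g:ℝ)) + (-(h:ℝ)) = -((e:ℝ) + f + g + h) by ring,
        neg_div_neg_eq]
    have e5 : ((-(a:ℝ)) * x * y + (-(b:ℝ)) * x + (-(c:ℝ)) * y + (-(d:ℝ))) /
        ((-(e:ℝ)) * x * y + (-(f:ℝ)) * x + (-(g:ℝ)) * y + (-(h:ℝ)))
        = ((a:ℝ) * x * y + b * x + c * y + d) / ((e:ℝ) * x * y + f * x + g * y + h) := by
      rw [show (-(a:ℝ)) * x * y + (-(b:ℝ)) * x + (-(c:ℝ)) * y + (-(d:ℝ))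
          = -((a:ℝ) * x * y + b * x + c * y + d) by ring,
        show (-(e:ℝ)) * x * y + (-(f:ℝ)) * x + (-(g:ℝ)) * y + (-(h:ℝ))
          = -((e:ℝ) * x * y + f * x + g * y + h) by ring, neg_div_neg_eq]
    rw [e1, e2, e3, e4, e5] at hmin hmax
    refine ⟨?_, hmin, hmax⟩
    have hlt : (e:ℝ) * x * y + f * x + g * y + h < 0 := by linarith [hd]
    exact hlt.ne
end

section
/- Let a, b, c, d, e, f, g, h be integers such that e, e+f, e+g and e+f+g+h are nonzero and all have the same sign, and suppose ⌊a/e⌋ = ⌊(a+b)/(e+f)⌋ = ⌊(a+c)/(e+g)⌋ = ⌊(a+b+c+d)/(e+f+g+h)⌋ = c₀ for some integer c₀. Then for all real numbers x, y with x ≥ 1 and y ≥ 1, one has ⌊(axy+bx+cy+d)/(exy+fx+gy+h)⌋ = c₀. -/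
lemma aux_pos (A B C D E F G H : ℝ) (c₀ : ℤ)
    (hE : 0 < E) (hEF : 0 < E + F) (hEG : 0 < E + G) (hS : 0 < E + F + G + H)
    (h1 : ⌊A / E⌋ = c₀) (h2 : ⌊(A + B) / (E + F)⌋ = c₀)
    (h3 : ⌊(A + C) / (E + G)⌋ = c₀) (h4 : ⌊(A + B + C + D) / (E + F + G + H)⌋ = c₀) :
    ∀ x y : ℝ, 1 ≤ x → 1 ≤ y →
      ⌊(A * x * y + B * x + C * y + D) / (E * x * y + F * x + G * y + H)⌋ = c₀ := by
  intro x y hx hy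
  have hs : (0:ℝ) ≤ x - 1 := by linarith
  have ht : (0:ℝ) ≤ y - 1 := by linarith
  have hst : (0:ℝ) ≤ (x - 1) * (y - 1) := mul_nonneg hs ht
  have b1 := (Int.floor_eq_iff).1 h1
  have b2 := (Int.floor_eq_iff).1 h2
  have b3 := (Int.floor_eq_iff).1 h3
  have b4 := (Int.floor_eq_iff).1 h4
  have l1 : (c₀:ℝ) * E ≤ A ∧ A < ((c₀:ℝ)+1) * E := by
    constructor
    · exact (le_div_iff₀ hE).1 b1.1
    · exact (div_lt_iff₀ hE).1 b1.2
  have l2 : (c₀:ℝ) * (E+F) ≤ A + B ∧ A + B < ((c₀:ℝ)+1) * (E+F) := by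
    exact ⟨(le_div_iff₀ hEF).1 b2.1, (div_lt_iff₀ hEF).1 b2.2⟩
  have l3 : (c₀:ℝ) * (E+G) ≤ A + C ∧ A + C < ((c₀:ℝ)+1) * (E+G) := by
    exact ⟨(le_div_iff₀ hEG).1 b3.1, (div_lt_iff₀ hEG).1 b3.2⟩
  have l4 : (c₀:ℝ) * (E+F+G+H) ≤ A + B + C + D ∧
      A + B + C + D < ((c₀:ℝ)+1) * (E+F+G+H) := by
    exact ⟨(le_div_iff₀ hS).1 b4.1, (div_lt_iff₀ hS).1 b4.2⟩
  have hD : 0 < E * x * y + F * x + G * y + H := by nlinarith [mul_nonneg hs ht]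
  rw [Int.floor_eq_iff]
  constructor
  · rw [le_div_iff₀ hD]
    nlinarith [mul_le_mul_of_nonneg_left l1.1 hst,
      mul_le_mul_of_nonneg_left l2.1 hs, mul_le_mul_of_nonneg_left l3.1 ht, l4.1]
  · rw [div_lt_iff₀ hD]
    nlinarith [mul_le_mul_of_nonneg_left l1.2.le hst,
      mul_le_mul_of_nonneg_left l2.2.le hs, mul_le_mul_of_nonneg_left l3.2.le ht, l4.2]

/-- If `e`, `e+f`, `e+g`, `e+f+g+h` are nonzero integers all of the same sign
and the floors `⌊a/e⌋ = ⌊(a+b)/(e+f)⌋ = ⌊(a+c)/(e+g)⌋ = ⌊(a+b+c+d)/(e+f+g+h)⌋ = c₀` agree,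
then for all reals `x, y ≥ 1`, `⌊(a*x*y+b*x+c*y+d)/(e*x*y+f*x+g*y+h)⌋ = c₀`. -/
theorem stmt_3 (a b c d e f g h c₀ : ℤ)
    (hsign : (0 < e ∧ 0 < e + f ∧ 0 < e + g ∧ 0 < e + f + g + h) ∨
             (e < 0 ∧ e + f < 0 ∧ e + g < 0 ∧ e + f + g + h < 0))
    (h1 : ⌊(a : ℝ) / e⌋ = c₀) (h2 : ⌊((a : ℝ) + b) / ((e : ℝ) + f)⌋ = c₀)
    (h3 : ⌊((a : ℝ) + c) / ((e : ℝ) + g)⌋ = c₀)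
    (h4 : ⌊((a : ℝ) + b + c + d) / ((e : ℝ) + f + g + h)⌋ = c₀) :
    ∀ x y : ℝ, 1 ≤ x → 1 ≤ y →
      ⌊((a : ℝ) * x * y + b * x + c * y + d) / ((e : ℝ) * x * y + f * x + g * y + h)⌋ = c₀ := by
  rcases hsign with ⟨q1, q2, q3, q4⟩ | ⟨q1, q2, q3, q4⟩
  · exact aux_pos (a:ℝ) b c d e f g h c₀
      (by exact_mod_cast q1) (by exact_mod_cast q2) (by exact_mod_cast q3)
      (by exact_mod_cast q4) h1 h2 h3 h4
  · intro x y hx hy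
    have := aux_pos (-(a:ℝ)) (-b) (-c) (-d) (-e) (-f) (-g) (-h) c₀
      (by have : ((e:ℝ)) < 0 := by exact_mod_cast q1
          linarith)
      (by have : ((e:ℝ)+f) < 0 := by exact_mod_cast q2
          linarith)
      (by have : ((e:ℝ)+g) < 0 := by exact_mod_cast q3
          linarith)
      (by have : ((e:ℝ)+f+g+h) < 0 := by exact_mod_cast q4
          linarith)
      (by rw [show (-(a:ℝ)) / (-(e:ℝ)) = (a:ℝ)/e by rw [neg_div_neg_eq]]; exact h1)
      (by rw [show (-(a:ℝ) + -(b:ℝ)) / (-(e:ℝ) + -(f:ℝ)) = ((a:ℝ)+b)/((e:ℝ)+f) by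
            rw [show (-(a:ℝ) + -(b:ℝ)) = -((a:ℝ)+b) by ring,
                show (-(e:ℝ) + -(f:ℝ)) = -((e:ℝ)+f) by ring, neg_div_neg_eq]]; exact h2)
      (by rw [show (-(a:ℝ) + -(c:ℝ)) / (-(e:ℝ) + -(g:ℝ)) = ((a:ℝ)+c)/((e:ℝ)+g) by
            rw [show (-(a:ℝ) + -(c:ℝ)) = -((a:ℝ)+c) by ring,
                show (-(e:ℝ) + -(g:ℝ)) = -((e:ℝ)+g) by ring, neg_div_neg_eq]]; exact h3)
      (by rw [show (-(a:ℝ) + -(b:ℝ) + -(c:ℝ) + -(d:ℝ)) / (-(e:ℝ) + -(f:ℝ) + -(g:ℝ) + -(h:ℝ))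
              = ((a:ℝ)+b+c+d)/((e:ℝ)+f+g+h) by
            rw [show (-(a:ℝ) + -(b:ℝ) + -(c:ℝ) + -(d:ℝ)) = -((a:ℝ)+b+c+d) by ring,
                show (-(e:ℝ) + -(f:ℝ) + -(g:ℝ) + -(h:ℝ)) = -((e:ℝ)+f+g+h) by ring,
                neg_div_neg_eq]]; exact h4)
      x y hx hy
    rw [show (-(a:ℝ) * x * y + -(b:ℝ) * x + -(c:ℝ) * y + -(d:ℝ))
          / (-(e:ℝ) * x * y + -(f:ℝ) * x + -(g:ℝ) * y + -(h:ℝ))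
        = ((a:ℝ) * x * y + b * x + c * y + d) / ((e:ℝ) * x * y + f * x + g * y + h) by
        rw [show (-(a:ℝ) * x * y + -(b:ℝ) * x + -(c:ℝ) * y + -(d:ℝ))
              = -((a:ℝ) * x * y + b * x + c * y + d) by ring,
            show (-(e:ℝ) * x * y + -(f:ℝ) * x + -(g:ℝ) * y + -(h:ℝ))
              = -((e:ℝ) * x * y + f * x + g * y + h) by ring, neg_div_neg_eq]] at this
    exact this
end

section
/- Let m ≥ 1, let x⁽¹⁾, …, x⁽ᵐ⁾ be real numbers, and for k = 1, …, m+1 let (Aₙ⁽ᵏ⁾)ₙ≥0 be sequences of integers with Aₙ⁽ᵐ⁺¹⁾ > 0 for all n and limₙ Aₙ⁽ᵏ⁾/Aₙ⁽ᵐ⁺¹⁾ = x⁽ᵏ⁾ for each k ∈ {1, …, m}. Let C = [cₖ⁽ⁱ⁾] (1 ≤ i, k ≤ m+1) be an integer matrix, set L⁽ⁱ⁾ = Σ_{k=1}^{m} cₖ⁽ⁱ⁾x⁽ᵏ⁾ + c_{m+1}⁽ⁱ⁾, and assume that (L⁽¹⁾, …, L⁽ᵐ⁺¹⁾) is linearly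 independent over ℚ. For n ≥ m and 1 ≤ j ≤ m+1 set Sⱼ(n) = Σ_{k=1}^{m+1} cₖ⁽ᵐ⁺¹⁾A_{n+1−j}⁽ᵏ⁾ and T_{i,j}(n) = Σ_{k=1}^{m+1} cₖ⁽ⁱ⁾A_{n+1−j}⁽ᵏ⁾. Then there exists N ≥ m such that for all n ≥ N: the numbers S₁(n), …, S_{m+1}(n) are all nonzero and all have the same sign, and for each i ∈ {1, …, m} the floors ⌊T_{i,j}(n)/Sⱼ(n)⌋ are equal for all j ∈ {1, …, m+1}, their common value being ⌊L⁽ⁱ⁾/L⁽ᵐ⁺¹⁾⌋. -/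
open Filter

private lemma div_div_aux (t s d : ℝ) (hd : d ≠ 0) : (t / d) / (s / d) = t / s := by
  rcases eq_or_ne s 0 with rfl | hs
  · simp
  · field_simp

/-- feasibility of the multidimensional Gosper algorithm, Möbius case.
With convergents `A n k` (denominators `A n (last) > 0`) converging to `x k`, an integer
matrix `C` whose rows give the linear forms `L i = ∑ C i k * x k + C i (last)`, and
`(L 0, …, L m)` linearly independent over `ℚ`, the quantities
`S n j = ∑ₖ C (last) k * A (n - j) k` and `T n i j = ∑ₖ C i k * A (n - j) k` satisfy: for all
sufficiently large `n`, the `S n j` are all nonzero of the same sign, and for each `i` the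
floors `⌊T n i j / S n j⌋` agree for all `j`, with common value `⌊L i / L (last)⌋`. -/
theorem stmt_10 (m : ℕ) (hm : 1 ≤ m) (x : Fin m → ℝ)
    (A : ℕ → Fin (m + 1) → ℤ)
    (hpos : ∀ n, 0 < A n (Fin.last m))
    (hlim : ∀ k : Fin m, Tendsto
      (fun n => (A n k.castSucc : ℝ) / (A n (Fin.last m) : ℝ)) atTop (nhds (x k)))
    (C : Matrix (Fin (m + 1)) (Fin (m + 1)) ℤ)
    (L : Fin (m + 1) → ℝ)
    (hL : ∀ i, L i = (∑ k : Fin m, (C i k.castSucc : ℝ) * x k) + (C i (Fin.last m) : ℝ))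
    (hli : LinearIndependent ℚ L)
    (S : ℕ → Fin (m + 1) → ℤ)
    (hS : ∀ n, ∀ j : Fin (m + 1), S n j = ∑ k : Fin (m + 1), C (Fin.last m) k * A (n - (j : ℕ)) k)
    (T : ℕ → Fin m → Fin (m + 1) → ℤ)
    (hT : ∀ n, ∀ i : Fin m, ∀ j : Fin (m + 1),
      T n i j = ∑ k : Fin (m + 1), C i.castSucc k * A (n - (j : ℕ)) k) :
    ∃ N : ℕ, m ≤ N ∧ ∀ n, N ≤ n →
      (∀ j, S n j ≠ 0) ∧
      ((∀ j, 0 < S n j) ∨ (∀ j, S n j < 0)) ∧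
      (∀ i : Fin m, ∀ j : Fin (m + 1),
        ⌊(T n i j : ℝ) / (S n j : ℝ)⌋ = ⌊L i.castSucc / L (Fin.last m)⌋) := by
  have hDpos : ∀ n, (0 : ℝ) < (A n (Fin.last m) : ℝ) := fun n => by exact_mod_cast hpos n
  have hDne : ∀ n, (A n (Fin.last m) : ℝ) ≠ 0 := fun n => (hDpos n).ne'
  -- key limit for each row of C
  have key : ∀ i : Fin (m + 1), Tendsto
      (fun n => (∑ k : Fin (m + 1), (C i k : ℝ) * (A n k : ℝ)) / (A n (Fin.last m) : ℝ))
      atTop (nhds (L i)) := by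
    intro i
    have heq : ∀ n, (∑ k : Fin (m + 1), (C i k : ℝ) * (A n k : ℝ)) / (A n (Fin.last m) : ℝ)
        = (∑ k : Fin m, (C i k.castSucc : ℝ) *
            ((A n k.castSucc : ℝ) / (A n (Fin.last m) : ℝ))) + (C i (Fin.last m) : ℝ) := by
      intro n
      rw [Fin.sum_univ_castSucc, add_div, Finset.sum_div]
      congr 1
      · exact Finset.sum_congr rfl fun k _ => mul_div_assoc _ _ _
      · rw [mul_div_assoc, div_self (hDne n), mul_one]
    simp only [heq, hL i]
    exact Tendsto.add (tendsto_finset_sum _ fun k _ => (hlim k).const_mul _) tendsto_const_nhds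
  -- shifted limits
  have keyS : ∀ j : Fin (m + 1), Tendsto
      (fun n => (S n j : ℝ) / (A (n - (j : ℕ)) (Fin.last m) : ℝ)) atTop
      (nhds (L (Fin.last m))) := by
    intro j
    refine ((key (Fin.last m)).comp (tendsto_sub_atTop_nat (j : ℕ))).congr fun n => ?_
    rw [Function.comp_apply, hS n j]
    push_cast
    ring
  have keyT : ∀ (i : Fin m) (j : Fin (m + 1)), Tendsto
      (fun n => (T n i j : ℝ) / (A (n - (j : ℕ)) (Fin.last m) : ℝ)) atTop
      (nhds (L i.castSucc)) := by
    intro i j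
    refine ((key i.castSucc).comp (tendsto_sub_atTop_nat (j : ℕ))).congr fun n => ?_
    rw [Function.comp_apply, hT n i j]
    push_cast
    ring
  have hne : L (Fin.last m) ≠ 0 := hli.ne_zero _
  -- ratio limits
  have keyR : ∀ (i : Fin m) (j : Fin (m + 1)), Tendsto
      (fun n => (T n i j : ℝ) / (S n j : ℝ)) atTop
      (nhds (L i.castSucc / L (Fin.last m))) := by
    intro i j
    refine ((keyT i j).div (keyS j) hne).congr fun n => ?_
    exact div_div_aux _ _ _ (hDne _)
  -- the ratio is never an integer
  have hnotint : ∀ (i : Fin m) (z : ℤ), L i.castSucc ≠ (z : ℝ) * L (Fin.last m) := by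
    intro i z h
    have h2 := Fintype.linearIndependent_iff.mp hli
    set g : Fin (m + 1) → ℚ := fun k =>
      (if k = i.castSucc then (1 : ℚ) else 0) - (if k = Fin.last m then (z : ℚ) else 0) with hg
    have hsum : ∑ k, g k • L k = 0 := by
      have : ∑ k, g k • L k = L i.castSucc - (z : ℝ) * L (Fin.last m) := by
        simp only [hg, sub_smul, ite_smul, zero_smul, one_smul, Finset.sum_sub_distrib,
          Finset.sum_ite_eq', Finset.mem_univ, if_true]
        rw [Rat.smul_def]
        push_cast
        ring
      rw [this, h, sub_self]
    have := h2 g hsum i.castSucc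
    have hne2 : i.castSucc ≠ Fin.last m := (Fin.castSucc_lt_last i).ne
    simp [hg, hne2] at this
  -- eventual floor equality
  have hfloor : ∀ (i : Fin m) (j : Fin (m + 1)), ∀ᶠ n in atTop,
      ⌊(T n i j : ℝ) / (S n j : ℝ)⌋ = ⌊L i.castSucc / L (Fin.last m)⌋ := by
    intro i j
    set r := L i.castSucc / L (Fin.last m) with hr
    have hlt : (⌊r⌋ : ℝ) < r := by
      rcases (Int.floor_le r).lt_or_eq with h | h
      · exact h
      · exact absurd (by rw [h, hr, div_mul_cancel₀ _ hne]) (hnotint i ⌊r⌋)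
    have hmem : Set.Ioo ((⌊r⌋ : ℝ)) (⌊r⌋ + 1) ∈ nhds r :=
      Ioo_mem_nhds hlt (Int.lt_floor_add_one r)
    filter_upwards [(keyR i j).eventually hmem] with n hn
    exact Int.floor_eq_iff.mpr ⟨hn.1.le, hn.2⟩
  -- eventual signs
  have hsign : (∀ᶠ n in atTop, ∀ j, 0 < S n j) ∨ (∀ᶠ n in atTop, ∀ j, S n j < 0) := by
    rcases hne.lt_or_gt with h | h
    · right
      rw [eventually_all]
      intro j
      filter_upwards [(keyS j).eventually (eventually_lt_nhds h)] with n hn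
      have hd := hDpos (n - (j : ℕ))
      have : (S n j : ℝ) < 0 := by
        rcases div_neg_iff.mp hn with ⟨_, h2⟩ | ⟨h1, _⟩
        · linarith
        · exact h1
      exact_mod_cast this
    · left
      rw [eventually_all]
      intro j
      filter_upwards [(keyS j).eventually (eventually_gt_nhds h)] with n hn
      have hd := hDpos (n - (j : ℕ))
      have : (0 : ℝ) < (S n j : ℝ) := by
        rcases div_pos_iff.mp hn with ⟨h1, _⟩ | ⟨_, h2⟩
        · exact h1
        · linarith
      exact_mod_cast this
  -- combine
  have hall : ∀ᶠ n in atTop, ((∀ j, 0 < S n j) ∨ (∀ j, S n j < 0)) ∧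
      (∀ (i : Fin m) (j : Fin (m + 1)),
        ⌊(T n i j : ℝ) / (S n j : ℝ)⌋ = ⌊L i.castSucc / L (Fin.last m)⌋) := by
    refine (hsign.elim (fun h => h.mono fun n hn => Or.inl hn)
      (fun h => h.mono fun n hn => Or.inr hn)).and ?_
    rw [eventually_all]
    intro i
    rw [eventually_all]
    exact hfloor i
  rcases eventually_atTop.mp hall with ⟨N₀, hN₀⟩
  refine ⟨max N₀ m, le_max_right _ _, fun n hn => ?_⟩
  obtain ⟨hsgn, hfl⟩ := hN₀ n (le_trans (le_max_left _ _) hn)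
  refine ⟨fun j => ?_, hsgn, hfl⟩
  rcases hsgn with h | h
  · exact (h j).ne'
  · exact (h j).ne
end

section
/- Let m ≥ 1, let x⁽¹⁾, …, x⁽ᵐ⁾, y⁽¹⁾, …, y⁽ᵐ⁾ be real numbers, and for k = 1, …, m+1 let (Aₙ⁽ᵏ⁾)ₙ≥0 and (Bₙ⁽ᵏ⁾)ₙ≥0 be sequences of integers with Aₙ⁽ᵐ⁺¹⁾ > 0 and Bₙ⁽ᵐ⁺¹⁾ > 0 for all n, limₙ Aₙ⁽ᵏ⁾/Aₙ⁽ᵐ⁺¹⁾ = x⁽ᵏ⁾ and limₙ Bₙ⁽ᵏ⁾/Bₙ⁽ᵐ⁺¹⁾ = y⁽ᵏ⁾ for k ∈ {1, …, m}. Set x⁽ᵐ⁺¹⁾ = y⁽ᵐ⁺¹⁾ = 1. For i = 1, …, m+1 let c_{k,h}⁽ⁱ⁾ (1 ≤ k, h ≤ m+1) be integers, set Λ⁽ⁱ⁾ = Σ_{k,h} c_{k,h}⁽ⁱ⁾x⁽ᵏ⁾y⁽ʰ⁾, and assume (Λ⁽¹⁾, …, Λ⁽ᵐ⁺¹⁾)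 is linearly independent over ℚ. For n₁, n₂ ≥ m and 1 ≤ j, l ≤ m+1 set S_{j,l}(n₁,n₂) = Σ_{k,h} c_{k,h}⁽ᵐ⁺¹⁾A_{n₁+1−j}⁽ᵏ⁾B_{n₂+1−l}⁽ʰ⁾ and T_{i,j,l}(n₁,n₂) = Σ_{k,h} c_{k,h}⁽ⁱ⁾A_{n₁+1−j}⁽ᵏ⁾B_{n₂+1−l}⁽ʰ⁾. Then there exists N ≥ m such that for all n₁, n₂ ≥ N: the numbers S_{j,l}(n₁,n₂) (1 ≤ j, l ≤ m+1) are all nonzero and all have the same sign, and for each i ∈ {1, …, m} the floors ⌊T_{i,j,l}(n₁,n₂)/S_{j,l}(n₁,n₂)⌋ are equal for all j, l ∈ {1, …, m+1}, their common value being ⌊Λ⁽ⁱ⁾/Λ⁽ᵐ⁺¹⁾⌋. -/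
open Filter

/-- feasibility of the multidimensional Gosper algorithm, bilinear case.
With two families of convergents `A n k`, `B n k` (positive denominators) converging to
`x k` and `y k`, `X = (x, 1)`, `Y = (y, 1)`, integer coefficients `c i k h` defining the
bilinear values `Λ i = ∑ c i k h * X k * Y h` with `(Λ 0, …, Λ m)` linearly independent over
`ℚ`, the quantities `S n₁ n₂ j l = ∑ c (last) k h * A (n₁ - j) k * B (n₂ - l) h` and
`T n₁ n₂ i j l = ∑ c i k h * A (n₁ - j) k * B (n₂ - l) h` satisfy: for all sufficiently large
`n₁, n₂`, the `S n₁ n₂ j l` are all nonzero of the same sign, and for each `i` the floors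
`⌊T / S⌋` agree for all `j, l`, with common value `⌊Λ i / Λ (last)⌋`. -/
theorem stmt_12 (m : ℕ) (hm : 1 ≤ m) (x y : Fin m → ℝ)
    (A B : ℕ → Fin (m + 1) → ℤ)
    (hApos : ∀ n, 0 < A n (Fin.last m)) (hBpos : ∀ n, 0 < B n (Fin.last m))
    (hAlim : ∀ k : Fin m, Tendsto
      (fun n => (A n k.castSucc : ℝ) / (A n (Fin.last m) : ℝ)) atTop (nhds (x k)))
    (hBlim : ∀ k : Fin m, Tendsto
      (fun n => (B n k.castSucc : ℝ) / (B n (Fin.last m) : ℝ)) atTop (nhds (y k)))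
    (X Y : Fin (m + 1) → ℝ) (hX : X = Fin.snoc x 1) (hY : Y = Fin.snoc y 1)
    (c : Fin (m + 1) → Fin (m + 1) → Fin (m + 1) → ℤ)
    (Λ : Fin (m + 1) → ℝ)
    (hΛ : ∀ i, Λ i = ∑ k : Fin (m + 1), ∑ h : Fin (m + 1), (c i k h : ℝ) * X k * Y h)
    (hli : LinearIndependent ℚ Λ)
    (S : ℕ → ℕ → Fin (m + 1) → Fin (m + 1) → ℤ)
    (hS : ∀ n₁ n₂ : ℕ, ∀ j l : Fin (m + 1), S n₁ n₂ j l =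
      ∑ k : Fin (m + 1), ∑ h : Fin (m + 1),
        c (Fin.last m) k h * A (n₁ - (j : ℕ)) k * B (n₂ - (l : ℕ)) h)
    (T : ℕ → ℕ → Fin m → Fin (m + 1) → Fin (m + 1) → ℤ)
    (hT : ∀ n₁ n₂ : ℕ, ∀ i : Fin m, ∀ j l : Fin (m + 1), T n₁ n₂ i j l =
      ∑ k : Fin (m + 1), ∑ h : Fin (m + 1),
        c i.castSucc k h * A (n₁ - (j : ℕ)) k * B (n₂ - (l : ℕ)) h) :
    ∃ N : ℕ, m ≤ N ∧ ∀ n₁ n₂ : ℕ, N ≤ n₁ → N ≤ n₂ →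
      (∀ j l, S n₁ n₂ j l ≠ 0) ∧
      ((∀ j l, 0 < S n₁ n₂ j l) ∨ (∀ j l, S n₁ n₂ j l < 0)) ∧
      (∀ i : Fin m, ∀ j l : Fin (m + 1),
        ⌊(T n₁ n₂ i j l : ℝ) / (S n₁ n₂ j l : ℝ)⌋ = ⌊Λ i.castSucc / Λ (Fin.last m)⌋) := by
  have hAne : ∀ n, (A n (Fin.last m) : ℝ) ≠ 0 := fun n => by
    exact_mod_cast (hApos n).ne'
  have hBne : ∀ n, (B n (Fin.last m) : ℝ) ≠ 0 := fun n => by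
    exact_mod_cast (hBpos n).ne'
  have hXk : ∀ k, Tendsto (fun n => (A n k : ℝ) / (A n (Fin.last m) : ℝ)) atTop (nhds (X k)) := by
    intro k
    refine Fin.lastCases ?_ ?_ k
    · rw [hX, Fin.snoc_last]
      exact Tendsto.congr (fun n => (div_self (hAne n)).symm) tendsto_const_nhds
    · intro k'
      rw [hX, Fin.snoc_castSucc]
      exact hAlim k'
  have hYk : ∀ k, Tendsto (fun n => (B n k : ℝ) / (B n (Fin.last m) : ℝ)) atTop (nhds (Y k)) := by
    intro k
    refine Fin.lastCases ?_ ?_ k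
    · rw [hY, Fin.snoc_last]
      exact Tendsto.congr (fun n => (div_self (hBne n)).symm) tendsto_const_nhds
    · intro k'
      rw [hY, Fin.snoc_castSucc]
      exact hBlim k'
  -- the normalized quantities
  set F : (Fin (m + 1) → Fin (m + 1) → ℤ) → ℕ → ℕ → ℝ := fun d p q =>
    (∑ k : Fin (m + 1), ∑ h : Fin (m + 1), (d k h : ℝ) * A p k * B q h) /
      ((A p (Fin.last m) : ℝ) * (B q (Fin.last m) : ℝ)) with hF
  have key : ∀ d : Fin (m + 1) → Fin (m + 1) → ℤ,
      Tendsto (fun z : ℕ × ℕ => F d z.1 z.2) (atTop ×ˢ atTop)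
        (nhds (∑ k : Fin (m + 1), ∑ h : Fin (m + 1), (d k h : ℝ) * X k * Y h)) := by
    intro d
    have h1 : ∀ z : ℕ × ℕ, (∑ k : Fin (m + 1), ∑ h : Fin (m + 1),
        (d k h : ℝ) * ((A z.1 k : ℝ) / (A z.1 (Fin.last m) : ℝ)) *
          ((B z.2 h : ℝ) / (B z.2 (Fin.last m) : ℝ))) = F d z.1 z.2 := by
      intro z
      simp only [hF, Finset.sum_div]
      refine Finset.sum_congr rfl fun k _ => Finset.sum_congr rfl fun h _ => ?_
      field_simp
    refine Tendsto.congr h1 ?_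
    refine tendsto_finset_sum _ fun k _ => tendsto_finset_sum _ fun h _ => ?_
    exact (tendsto_const_nhds.mul ((hXk k).comp tendsto_fst)).mul ((hYk h).comp tendsto_snd)
  have hΛne : Λ (Fin.last m) ≠ 0 := hli.ne_zero _
  have hirr : ∀ i : Fin m, Irrational (Λ i.castSucc / Λ (Fin.last m)) := by
    intro i
    rw [Irrational]
    rintro ⟨q, hq⟩
    have hne : i.castSucc ≠ Fin.last m := (Fin.castSucc_lt_last i).ne
    have hpair : LinearIndependent ℚ ![Λ i.castSucc, Λ (Fin.last m)] := by
      have hinj : Function.Injective ![i.castSucc, Fin.last m] := by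
        intro a b hab
        fin_cases a <;> fin_cases b <;> simp at hab ⊢ <;> exact absurd hab.symm hne
      have h2 := hli.comp ![i.castSucc, Fin.last m] hinj
      convert h2 using 1
      ext a
      fin_cases a <;> simp
    rw [LinearIndependent.pair_iff] at hpair
    have hval : Λ i.castSucc = (q : ℝ) * Λ (Fin.last m) := by
      have := hq.symm
      rw [div_eq_iff hΛne] at this
      linarith [this]
    have hrel : (1 : ℚ) • Λ i.castSucc + (-q) • Λ (Fin.last m) = 0 := by
      rw [Rat.smul_def, Rat.smul_def, hval]
      push_cast
      ring
    exact one_ne_zero (hpair 1 (-q) hrel).1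
  have hlimF : ∀ i : Fin (m + 1), Tendsto (fun z : ℕ × ℕ => F (c i) z.1 z.2)
      (atTop ×ˢ atTop) (nhds (Λ i)) := by
    intro i
    rw [hΛ i]
    exact key (c i)
  -- big eventual statement
  have hevF : ∀ᶠ z : ℕ × ℕ in atTop ×ˢ atTop,
      (F (c (Fin.last m)) z.1 z.2 ≠ 0) ∧
      (0 < Λ (Fin.last m) → 0 < F (c (Fin.last m)) z.1 z.2) ∧
      (Λ (Fin.last m) < 0 → F (c (Fin.last m)) z.1 z.2 < 0) ∧
      (∀ i : Fin m, ⌊F (c i.castSucc) z.1 z.2 / F (c (Fin.last m)) z.1 z.2⌋ =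
        ⌊Λ i.castSucc / Λ (Fin.last m)⌋) := by
    have e1 : ∀ᶠ z : ℕ × ℕ in atTop ×ˢ atTop, F (c (Fin.last m)) z.1 z.2 ≠ 0 :=
      (hlimF (Fin.last m)).eventually_ne hΛne
    have e2 : ∀ᶠ z : ℕ × ℕ in atTop ×ˢ atTop,
        0 < Λ (Fin.last m) → 0 < F (c (Fin.last m)) z.1 z.2 := by
      by_cases h : 0 < Λ (Fin.last m)
      · exact ((hlimF (Fin.last m)).eventually (eventually_gt_nhds h)).mono fun z hz _ => hz
      · exact Eventually.of_forall fun z h' => absurd h' h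
    have e3 : ∀ᶠ z : ℕ × ℕ in atTop ×ˢ atTop,
        Λ (Fin.last m) < 0 → F (c (Fin.last m)) z.1 z.2 < 0 := by
      by_cases h : Λ (Fin.last m) < 0
      · exact ((hlimF (Fin.last m)).eventually (eventually_lt_nhds h)).mono fun z hz _ => hz
      · exact Eventually.of_forall fun z h' => absurd h' h
    have e4 : ∀ᶠ z : ℕ × ℕ in atTop ×ˢ atTop, ∀ i : Fin m,
        ⌊F (c i.castSucc) z.1 z.2 / F (c (Fin.last m)) z.1 z.2⌋ =
          ⌊Λ i.castSucc / Λ (Fin.last m)⌋ := by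
      rw [eventually_all]
      intro i
      have hr := (hlimF i.castSucc).div (hlimF (Fin.last m)) hΛne
      set r := Λ i.castSucc / Λ (Fin.last m) with hrdef
      have hlo : ((⌊r⌋ : ℝ)) < r :=
        lt_of_le_of_ne (Int.floor_le r) (((hirr i).ne_int ⌊r⌋).symm)
      have hhi : r < (⌊r⌋ : ℝ) + 1 := Int.lt_floor_add_one r
      refine (hr.eventually (Ioo_mem_nhds hlo hhi)).mono fun z hz => ?_
      exact Int.floor_eq_iff.mpr ⟨hz.1.le, hz.2⟩
    filter_upwards [e1, e2, e3, e4] with z h1 h2 h3 h4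
    exact ⟨h1, h2, h3, h4⟩
  rw [prod_atTop_atTop_eq, eventually_atTop] at hevF
  obtain ⟨a, ha⟩ := hevF
  refine ⟨max a.1 a.2 + m, le_add_self, fun n₁ n₂ hn₁ hn₂ => ?_⟩
  have hQ : ∀ j l : Fin (m + 1),
      (F (c (Fin.last m)) (n₁ - (j : ℕ)) (n₂ - (l : ℕ)) ≠ 0) ∧
      (0 < Λ (Fin.last m) → 0 < F (c (Fin.last m)) (n₁ - (j : ℕ)) (n₂ - (l : ℕ))) ∧
      (Λ (Fin.last m) < 0 → F (c (Fin.last m)) (n₁ - (j : ℕ)) (n₂ - (l : ℕ)) < 0) ∧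
      (∀ i : Fin m, ⌊F (c i.castSucc) (n₁ - (j : ℕ)) (n₂ - (l : ℕ)) /
          F (c (Fin.last m)) (n₁ - (j : ℕ)) (n₂ - (l : ℕ))⌋ =
        ⌊Λ i.castSucc / Λ (Fin.last m)⌋) := by
    intro j l
    refine ha (n₁ - (j : ℕ), n₂ - (l : ℕ)) ⟨?_, ?_⟩
    · refine Nat.le_sub_of_add_le ?_
      calc a.1 + (j : ℕ) ≤ max a.1 a.2 + m := add_le_add (le_max_left _ _) (Fin.is_le j)
        _ ≤ n₁ := hn₁
    · refine Nat.le_sub_of_add_le ?_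
      calc a.2 + (l : ℕ) ≤ max a.1 a.2 + m := add_le_add (le_max_right _ _) (Fin.is_le l)
        _ ≤ n₂ := hn₂
  have hK : ∀ p q : ℕ, (0 : ℝ) < (A p (Fin.last m) : ℝ) * (B q (Fin.last m) : ℝ) := by
    intro p q
    have := mul_pos (hApos p) (hBpos q)
    exact_mod_cast this
  have hScast : ∀ j l : Fin (m + 1), (S n₁ n₂ j l : ℝ) =
      ((A (n₁ - (j : ℕ)) (Fin.last m) : ℝ) * (B (n₂ - (l : ℕ)) (Fin.last m) : ℝ)) *
        F (c (Fin.last m)) (n₁ - (j : ℕ)) (n₂ - (l : ℕ)) := by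
    intro j l
    simp only [hF]
    rw [mul_div_cancel₀ _ (hK _ _).ne']
    rw [hS]
    push_cast
    ring
  have hTcast : ∀ (i : Fin m) (j l : Fin (m + 1)), (T n₁ n₂ i j l : ℝ) =
      ((A (n₁ - (j : ℕ)) (Fin.last m) : ℝ) * (B (n₂ - (l : ℕ)) (Fin.last m) : ℝ)) *
        F (c i.castSucc) (n₁ - (j : ℕ)) (n₂ - (l : ℕ)) := by
    intro i j l
    simp only [hF]
    rw [mul_div_cancel₀ _ (hK _ _).ne']
    rw [hT]
    push_cast
    ring
  refine ⟨?_, ?_, ?_⟩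
  · intro j l h0
    have : (S n₁ n₂ j l : ℝ) = 0 := by exact_mod_cast h0
    rw [hScast j l] at this
    exact (hQ j l).1 ((mul_eq_zero.mp this).resolve_left (hK _ _).ne')
  · rcases hΛne.lt_or_gt with hneg | hpos
    · refine Or.inr fun j l => ?_
      have : (S n₁ n₂ j l : ℝ) < 0 := by
        rw [hScast j l]
        exact mul_neg_of_pos_of_neg (hK _ _) ((hQ j l).2.2.1 hneg)
      exact_mod_cast this
    · refine Or.inl fun j l => ?_
      have : (0 : ℝ) < (S n₁ n₂ j l : ℝ) := by
        rw [hScast j l]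
        exact mul_pos (hK _ _) ((hQ j l).2.1 hpos)
      exact_mod_cast this
  · intro i j l
    rw [hTcast i j l, hScast j l, mul_div_mul_left _ _ (hK _ _).ne']
    exact (hQ j l).2.2.2 i
end

section
/- Let m ≥ 1, let x = (x⁽¹⁾, …, x⁽ᵐ⁾) ∈ ℝᵐ, let C = [cⱼ⁽ⁱ⁾] be an (m+1)×(m+1) real matrix with associated linear forms L⁽ⁱ⁾(x, 1) = Σ_{j=1}^{m} cⱼ⁽ⁱ⁾x⁽ʲ⁾ + c_{m+1}⁽ⁱ⁾, and suppose L⁽ᵐ⁺¹⁾(x, 1) ≠ 0. Set y⁽ⁱ⁾ = L⁽ⁱ⁾(x, 1)/L⁽ᵐ⁺¹⁾(x, 1) for i ∈ {1, …, m}, let b = (b⁽¹⁾, …, b⁽ᵐ⁾) ∈ ℤᵐ with y⁽ᵐ⁾ ≠ b⁽ᵐ⁾, and let C' = P·C, where P is the (m+1)×(m+1) matrix whose first row is the standard basis vector e_{m+1} and whose (i+1)-th row is e_i − b⁽ⁱ⁾e_{m+1} for 1 ≤ i ≤ m. Then L'⁽ᵐ⁺¹⁾(x, 1) ≠ 0,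 L'⁽¹⁾(x, 1)/L'⁽ᵐ⁺¹⁾(x, 1) = 1/(y⁽ᵐ⁾ − b⁽ᵐ⁾), and L'⁽ⁱ⁺¹⁾(x, 1)/L'⁽ᵐ⁺¹⁾(x, 1) = (y⁽ⁱ⁾ − b⁽ⁱ⁾)/(y⁽ᵐ⁾ − b⁽ᵐ⁾) for 1 ≤ i ≤ m−1, where L'⁽ⁱ⁾ are the linear forms with coefficient rows of C'. -/
/-- The linear form given by row `i` of `C` evaluated at `(x, 1)`:
`L⁽ⁱ⁾(x, 1) = ∑ⱼ C i j * x j + C i (last)`. -/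
def linForm {m : ℕ} (C : Matrix (Fin (m + 1)) (Fin (m + 1)) ℝ) (x : Fin m → ℝ)
    (i : Fin (m + 1)) : ℝ :=
  (∑ j : Fin m, C i j.castSucc * x j) + C i (Fin.last m)

lemma linForm_mul {m : ℕ} (P C : Matrix (Fin (m + 1)) (Fin (m + 1)) ℝ) (x : Fin m → ℝ)
    (i : Fin (m + 1)) : linForm (P * C) x i = ∑ k, P i k * linForm C x k := by
  simp only [linForm, Matrix.mul_apply, Finset.sum_mul, mul_add, Finset.mul_sum,
    Finset.sum_add_distrib, mul_assoc]
  rw [Finset.sum_comm]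

/-- correctness of the output step; dimension `m + 1 ≥ 1`. Suppose
`L⁽ᵐ⁺¹⁾(x,1) ≠ 0`, set `y i = L⁽ⁱ⁾(x,1) / L⁽ᵐ⁺¹⁾(x,1)`, take integers `b i` with
`y (last) ≠ b (last)`, and let `P` be the matrix whose first row is `e_(last)` and whose
`(i+1)`-st row is `e_i - b i • e_(last)`. Then the linear forms `L'` of `P * C` satisfy
`L'⁽ᵐ⁺¹⁾(x,1) ≠ 0`, `L'⁽¹⁾/L'⁽ᵐ⁺¹⁾ = 1 / (y last - b last)` and
`L'⁽ⁱ⁺¹⁾/L'⁽ᵐ⁺¹⁾ = (y i - b i) / (y last - b last)`. -/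
theorem stmt_18 (m : ℕ) (x : Fin (m + 1) → ℝ)
    (C : Matrix (Fin (m + 1 + 1)) (Fin (m + 1 + 1)) ℝ)
    (hL : linForm C x (Fin.last (m + 1)) ≠ 0)
    (y : Fin (m + 1) → ℝ)
    (hy : ∀ i : Fin (m + 1),
      y i = linForm C x i.castSucc / linForm C x (Fin.last (m + 1)))
    (b : Fin (m + 1) → ℤ)
    (hne : y (Fin.last m) ≠ (b (Fin.last m) : ℝ))
    (P : Matrix (Fin (m + 1 + 1)) (Fin (m + 1 + 1)) ℝ)
    (hP0 : ∀ j, P 0 j = if j = Fin.last (m + 1) then 1 else 0)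
    (hPi : ∀ i : Fin (m + 1), ∀ j, P i.succ j =
      (if j = i.castSucc then 1 else 0) - (if j = Fin.last (m + 1) then (b i : ℝ) else 0)) :
    linForm (P * C) x (Fin.last (m + 1)) ≠ 0 ∧
    linForm (P * C) x 0 / linForm (P * C) x (Fin.last (m + 1))
      = 1 / (y (Fin.last m) - (b (Fin.last m) : ℝ)) ∧
    ∀ i : Fin m,
      linForm (P * C) x i.succ.castSucc / linForm (P * C) x (Fin.last (m + 1))
        = (y i.castSucc - (b i.castSucc : ℝ)) / (y (Fin.last m) - (b (Fin.last m) : ℝ)) := by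
  set L := linForm C x with hLdef
  have hrow : ∀ i : Fin (m + 1),
      linForm (P * C) x i.succ = L i.castSucc - (b i : ℝ) * L (Fin.last (m + 1)) := by
    intro i
    rw [linForm_mul]
    simp only [hPi, sub_mul, ite_mul, one_mul, zero_mul, Finset.sum_sub_distrib,
      Finset.sum_ite_eq', Finset.mem_univ, if_true]
    rfl
  have h0 : linForm (P * C) x 0 = L (Fin.last (m + 1)) := by
    rw [linForm_mul]
    simp only [hP0, ite_mul, one_mul, zero_mul, Finset.sum_ite_eq', Finset.mem_univ, if_true]
    rfl
  have hlastv : linForm (P * C) x (Fin.last (m + 1))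
      = L (Fin.last (m + 1)) * (y (Fin.last m) - (b (Fin.last m) : ℝ)) := by
    have h := hrow (Fin.last m)
    have hs : (Fin.last m).succ = Fin.last (m + 1) := rfl
    rw [hs] at h
    rw [h, hy]
    field_simp
  have hsub : y (Fin.last m) - (b (Fin.last m) : ℝ) ≠ 0 := sub_ne_zero.mpr hne
  have hL' : linForm (P * C) x (Fin.last (m + 1)) ≠ 0 := by
    rw [hlastv]; exact mul_ne_zero hL hsub
  refine ⟨hL', ?_, ?_⟩
  · rw [h0, hlastv]
    field_simp
  · intro i
    have hidx : i.succ.castSucc = (i.castSucc).succ := (Fin.succ_castSucc _).symm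
    rw [hidx, hrow, hlastv]
    simp only [hy]
    field_simp
end
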